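/- With the polynomials A_{m,i} as defined by the recursion above, for all m ≥ 1 and 0 ≤ i ≤ r one has A_{m,m+i} ≡ φ^m(z^{(i)}) modulo the ideal generated by w, w', …, w^{(m−1)}; and for 0 ≤ i ≤ m−1 one has A_{m,i} ≡ 0 modulo the same ideal. -/

import Mathlib

open MvPolynomial

/-- With `A_{m,i}` as defined by the recursion, for all `m ≥ 1` and `0 ≤ i ≤ r` one has
`A_{m,m+i} ≡ φᵐ(z⁽ⁱ⁾)` modulo the ideal generated by `w, w', …, w⁽ᵐ⁻¹⁾`, and
`A_{m,i} ≡ 0` modulo the same ideal for `0 ≤ i ≤ m−1`. -/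
theorem A_m_congruences_mod_w (p r : ℕ) (hp : p.Prime)
    (φ : MvPolynomial (Fin (r + 1) × ℕ ⊕ ℕ) ℤ →+* MvPolynomial (Fin (r + 1) × ℕ ⊕ ℕ) ℤ)
    (δ : MvPolynomial (Fin (r + 1) × ℕ ⊕ ℕ) ℤ → MvPolynomial (Fin (r + 1) × ℕ ⊕ ℕ) ℤ)
    (hφδ : ∀ F, φ F = F ^ p + p * δ F)
    (hz : ∀ (i : Fin (r + 1)) (k : ℕ), δ (X (Sum.inl (i, k))) = X (Sum.inl (i, k + 1)))
    (hw : ∀ j : ℕ, δ (X (Sum.inr j)) = X (Sum.inr (j + 1)))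
    (A : ℕ → ℕ → MvPolynomial (Fin (r + 1) × ℕ ⊕ ℕ) ℤ)
    (hA0 : ∀ i : ℕ, ∀ h : i ≤ r, A 0 i = X (Sum.inl (⟨i, by omega⟩, 0)))
    (hArec0 : ∀ m : ℕ, A (m + 1) 0 = -(X (Sum.inr m)) ^ (p - 1) * A m 0)
    (hArec : ∀ m i : ℕ, 1 ≤ i → i ≤ m + r →
      A (m + 1) i = φ (A m (i - 1)) - (X (Sum.inr m)) ^ (p - 1) * A m i)
    (hArecTop : ∀ m : ℕ, A (m + 1) (m + r + 1) = φ (A m (m + r))) :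
    ∀ m : ℕ, 1 ≤ m →
      (∀ i : Fin (r + 1), A m (m + (i : ℕ)) - (⇑φ)^[m] (X (Sum.inl (i, 0))) ∈
        Ideal.span ((fun j : ℕ => (X (Sum.inr j) :
          MvPolynomial (Fin (r + 1) × ℕ ⊕ ℕ) ℤ)) '' Set.Iio m)) ∧
      (∀ i : ℕ, i < m → A m i ∈
        Ideal.span ((fun j : ℕ => (X (Sum.inr j) :
          MvPolynomial (Fin (r + 1) × ℕ ⊕ ℕ) ℤ)) '' Set.Iio m)) := by
  set S : ℕ → Ideal (MvPolynomial (Fin (r + 1) × ℕ ⊕ ℕ) ℤ) :=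
    fun m => Ideal.span ((fun j : ℕ => (X (Sum.inr j) :
      MvPolynomial (Fin (r + 1) × ℕ ⊕ ℕ) ℤ)) '' Set.Iio m) with hS
  have hgen : ∀ (m j : ℕ), j < m →
      (X (Sum.inr j) : MvPolynomial (Fin (r + 1) × ℕ ⊕ ℕ) ℤ) ∈ S m :=
    fun m j hj => Ideal.subset_span ⟨j, hj, rfl⟩
  have hpowmem : ∀ (m j n : ℕ), j < m → 1 ≤ n →
      (X (Sum.inr j) : MvPolynomial (Fin (r + 1) × ℕ ⊕ ℕ) ℤ) ^ n ∈ S m := by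
    intro m j n hj hn
    exact Ideal.pow_mem_of_mem _ (hgen m j hj) n hn
  have hp1 : 1 ≤ p - 1 := by have := hp.two_le; omega
  have hmono : ∀ m, S m ≤ S (m + 1) := by
    intro m
    exact Ideal.span_mono (Set.image_mono (fun j hj => by
      simp only [Set.mem_Iio] at *; omega))
  have hphi : ∀ m F, F ∈ S m → φ F ∈ S (m + 1) := by
    intro m
    have : S m ≤ Ideal.comap φ (S (m + 1)) := by
      rw [hS, Ideal.span_le]
      rintro _ ⟨j, hj, rfl⟩
      simp only [Set.mem_Iio] at hj
      simp only [SetLike.mem_coe, Ideal.mem_comap]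
      rw [hφδ, hw]
      exact add_mem (hpowmem _ _ _ (by omega) hp.one_lt.le)
        (Ideal.mul_mem_left _ _ (hgen _ _ (by omega)))
    exact fun F hF => this hF
  intro m hm
  induction m, hm using Nat.le_induction with
  | base =>
    constructor
    · intro i
      rcases lt_or_eq_of_le (Nat.lt_succ_iff.mp i.isLt) with hir | hir
      · rw [hArec 0 (1 + (i : ℕ)) (by omega) (by omega)]
        have h1 : 1 + (i : ℕ) - 1 = (i : ℕ) := by omega
        rw [h1, hA0 (i : ℕ) (by omega), Function.iterate_one]
        have : φ (X (Sum.inl (⟨(i : ℕ), by omega⟩, 0))) -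
            (X (Sum.inr 0)) ^ (p - 1) * A 0 (1 + (i : ℕ)) -
            φ (X (Sum.inl (i, 0))) =
            -((X (Sum.inr 0)) ^ (p - 1) * A 0 (1 + (i : ℕ))) := by
          have : (⟨(i : ℕ), by omega⟩ : Fin (r + 1)) = i := rfl
          rw [this]; ring
        rw [this]
        exact neg_mem (Ideal.mul_mem_right _ _ (hpowmem 1 0 _ (by omega) hp1))
      · have hidx : 1 + (i : ℕ) = 0 + r + 1 := by omega
        rw [hidx, hArecTop 0, Nat.zero_add, hA0 r (le_refl r), Function.iterate_one]
        have hieq : (⟨r, by omega⟩ : Fin (r + 1)) = i := by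
          apply Fin.ext; simp [hir]
        rw [hieq]
        simp
    · intro i hi
      interval_cases i
      rw [hArec0 0]
      exact Ideal.mul_mem_right _ _ (neg_mem (hpowmem 1 0 _ (by omega) hp1))
  | succ m hm ih =>
    obtain ⟨ih1, ih2⟩ := ih
    constructor
    · intro i
      rcases lt_or_eq_of_le (Nat.lt_succ_iff.mp i.isLt) with hir | hir
      · rw [hArec m (m + 1 + (i : ℕ)) (by omega) (by omega)]
        have h1 : m + 1 + (i : ℕ) - 1 = m + (i : ℕ) := by omega
        rw [h1, Function.iterate_succ_apply']
        have heq : φ (A m (m + (i : ℕ))) -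
            (X (Sum.inr m)) ^ (p - 1) * A m (m + 1 + (i : ℕ)) -
            φ ((⇑φ)^[m] (X (Sum.inl (i, 0)))) =
            φ (A m (m + (i : ℕ)) - (⇑φ)^[m] (X (Sum.inl (i, 0)))) +
            -((X (Sum.inr m)) ^ (p - 1) * A m (m + 1 + (i : ℕ))) := by
          rw [map_sub]; ring
        rw [heq]
        exact add_mem (hphi m _ (ih1 i))
          (neg_mem (Ideal.mul_mem_right _ _ (hpowmem (m + 1) m _ (by omega) hp1)))
      · have hidx : m + 1 + (i : ℕ) = m + r + 1 := by omega
        rw [hidx, hArecTop m, Function.iterate_succ_apply']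
        have hieq : m + r = m + (i : ℕ) := by omega
        rw [hieq, ← map_sub]
        exact hphi m _ (ih1 i)
    · intro i hi
      rcases Nat.eq_zero_or_pos i with hi0 | hi0
      · subst hi0
        rw [hArec0 m]
        exact Ideal.mul_mem_right _ _ (neg_mem (hpowmem (m + 1) m _ (by omega) hp1))
      · rw [hArec m i hi0 (by omega)]
        exact sub_mem (hphi m _ (ih2 (i - 1) (by omega)))
          (Ideal.mul_mem_right _ _ (hpowmem (m + 1) m _ (by omega) hp1))
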